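/- Let F be a field of characteristic p ≥ 3 and let h be the Heisenberg algebra over F with basis (e₁, e₂, e₃). A map ω : h → h satisfies (i) ω(λu) = λ^p·ω(u) for all λ ∈ F, u ∈ h, (ii) ω(u + v) = ω(u) + ω(v) for all u, v ∈ h, and (iii) ⁅u, ω(v)⁆ equals the (p−1)-fold right-bracket iterate (w ↦ ⁅w, v⁆)^[p−1](u) for all u, v ∈ h, if and only if there exist a, b, c ∈ F such that ω(α·e₁ + β·e₂ + γ·e₃) = (α^p·a + β^p·b + γ^p·c)·e₃ for all α, β, γ ∈ F. (Conditions (i)–(iii) are precisely the axioms of a p-map на h: since h is nilpotent of class 2 and p ≥ 3, the correction terms Σ sᵢ(x,y) in the general additivity axiom of a p-map vanish.) -/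

import Mathlib

/-- Over a field of characteristic `p ≥ 3`, the `p`-maps on the Heisenberg algebra
(with basis `E 0, E 1, E 2`, `⁅E 0, E 1⁆ = E 2` central) are exactly the maps
`α•E0 + β•E1 + γ•E2 ↦ (α^p a + β^p b + γ^p c) • E2` for scalars `a, b, c`. -/
theorem statement2 (F : Type*) [Field F] (p : ℕ) [CharP F p] (hp : 3 ≤ p)
    (h : Type*) [LieRing h] [LieAlgebra F h]
    (E : Module.Basis (Fin 3) F h)
    (hE01 : ⁅E 0, E 1⁆ = E 2) (hE02 : ⁅E 0, E 2⁆ = 0) (hE12 : ⁅E 1, E 2⁆ = 0)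
    (ω : h → h) :
    ((∀ (l : F) (u : h), ω (l • u) = l ^ p • ω u) ∧
     (∀ u v : h, ω (u + v) = ω u + ω v) ∧
     (∀ u v : h, ⁅u, ω v⁆ = (fun w => ⁅w, v⁆)^[p - 1] u)) ↔
    ∃ a b c : F, ∀ α β γ : F,
      ω (α • E 0 + β • E 1 + γ • E 2) = (α ^ p * a + β ^ p * b + γ ^ p * c) • E 2 := by
  haveI : NeZero p := ⟨by omega⟩
  have hP : p.Prime := CharP.char_is_prime_of_pos F p |>.out
  haveI : Fact p.Prime := ⟨hP⟩
  have hdec : ∀ u : h, u = E.repr u 0 • E 0 + E.repr u 1 • E 1 + E.repr u 2 • E 2 := by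
    intro u
    have := E.sum_repr u
    rw [Fin.sum_univ_three] at this
    exact this.symm
  have h10 : ⁅E 1, E 0⁆ = -E 2 := by rw [← lie_skew, hE01]
  have h20 : ⁅E 2, E 0⁆ = 0 := by rw [← lie_skew, hE02, neg_zero]
  have h21 : ⁅E 2, E 1⁆ = 0 := by rw [← lie_skew, hE12, neg_zero]
  have hbr : ∀ u v : h,
      ⁅u, v⁆ = (E.repr u 0 * E.repr v 1 - E.repr u 1 * E.repr v 0) • E 2 := by
    intro u v
    conv_lhs => rw [hdec u, hdec v]
    simp only [add_lie, lie_add, smul_lie, lie_smul, hE01, hE02, hE12, h10, h20, h21,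
      lie_self, smul_zero, smul_neg, add_zero, zero_add, smul_smul]
    module
  have hrE2 : ∀ w : h, ⁅w, E 2⁆ = 0 := by
    intro w
    conv_lhs => rw [hdec w]
    simp [add_lie, smul_lie, hE02, hE12]
  have hlE2 : ∀ w : h, ⁅E 2, w⁆ = 0 := fun w => by rw [← lie_skew, hrE2, neg_zero]
  have hit0 : ∀ (v : h) (m : ℕ), (fun w => ⁅w, v⁆)^[m] 0 = 0 := by
    intro v m
    induction m with
    | zero => simp
    | succ n ih => rw [Function.iterate_succ_apply', ih]; simp
  have hit : ∀ (v u : h) (n : ℕ), (fun w => ⁅w, v⁆)^[n + 2] u = 0 := by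
    intro v u n
    rw [Function.iterate_add_apply]
    have h2 : (fun w => ⁅w, v⁆)^[2] u = 0 := by
      show ⁅⁅u, v⁆, v⁆ = 0
      rw [hbr u v, smul_lie, hlE2, smul_zero]
    rw [h2, hit0]
  have hp31 : p - 1 = (p - 3) + 2 := by omega
  constructor
  · rintro ⟨h1, h2, h3⟩
    have hcent : ∀ i : Fin 3, ω (E i) = E.repr (ω (E i)) 2 • E 2 := by
      intro i
      have hz : ∀ u : h, ⁅u, ω (E i)⁆ = 0 := by
        intro u
        rw [h3 u (E i), hp31, hit]
      have h0 := hz (E 0)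
      rw [hbr] at h0
      simp only [Module.Basis.repr_self, Finsupp.single_apply] at h0
      norm_num at h0
      have h1' := hz (E 1)
      rw [hbr] at h1'
      simp only [Module.Basis.repr_self, Finsupp.single_apply] at h1'
      norm_num at h1'
      have e0 : E.repr (ω (E i)) 1 = 0 := by
        rcases h0 with hs | hs
        · exact hs
        · exact absurd hs (E.ne_zero 2)
      have e1 : E.repr (ω (E i)) 0 = 0 := by
        rcases h1' with hs | hs
        · exact hs
        · exact absurd hs (E.ne_zero 2)
      conv_lhs => rw [hdec (ω (E i))]
      rw [e0, e1]
      simp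
    refine ⟨E.repr (ω (E 0)) 2, E.repr (ω (E 1)) 2, E.repr (ω (E 2)) 2, fun α β γ => ?_⟩
    conv_lhs => rw [h2, h2, h1, h1, h1, hcent 0, hcent 1, hcent 2]
    module
  · rintro ⟨a, b, c, hω⟩
    have hω' : ∀ u : h,
        ω u = ((E.repr u 0) ^ p * a + (E.repr u 1) ^ p * b + (E.repr u 2) ^ p * c) • E 2 := by
      intro u
      conv_lhs => rw [hdec u]
      exact hω _ _ _
    refine ⟨?_, ?_, ?_⟩
    · intro l u
      rw [hω', hω', smul_smul]
      simp only [map_smul, Finsupp.smul_apply, smul_eq_mul]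
      congr 1
      ring
    · intro u v
      rw [hω' (u + v), hω' u, hω' v, ← add_smul]
      simp only [map_add, Finsupp.add_apply]
      congr 1
      rw [add_pow_char, add_pow_char, add_pow_char]
      ring
    · intro u v
      rw [hω' v, lie_smul, hrE2, smul_zero, hp31, hit]
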